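/- Let K_S and K̂_S be generalized number lattices on a finite set S. Then (K_S + K̂_S)^d = K_S^d ∩ K̂_S^d, and consequently (K_S ∩ K̂_S)^d = K_S^d + K̂_S^d. -/

import Mathlib

open scoped Pointwise

/-- A generalized number lattice. -/
def IsGenNumLat {M : Type*} [AddCommGroup M] [Module ℚ M] (K : Set M) : Prop :=
  ∃ (n k : ℕ) (b : Fin n → M) (c : Fin k → M),
    K = {x | ∃ (l : Fin n → ℤ) (m : Fin k → ℚ),
      x = (∑ i, (l i : ℚ) • b i) + ∑ j, m j • c j}

/-- The dual of a collection of vectors. -/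
def dualLat {X : Type*} [Fintype X] (K : Set (X → ℚ)) : Set (X → ℚ) :=
  {g | ∀ f ∈ K, ∃ z : ℤ, ∑ x, f x * g x = (z : ℚ)}

section Aux

open Matrix
open scoped Classical

variable {X : Type*} [Fintype X]

/-- A lattice described by a family of rows `v`, integer coefficients on `P`,
rational coefficients on `Q`, zero elsewhere. -/
def LatOf (v : X → (X → ℚ)) (P Q : Set X) : Set (X → ℚ) :=
  {f | ∃ coef : X → ℚ, f = ∑ i, coef i • v i ∧ (∀ i ∈ P, ∃ z : ℤ, coef i = (z : ℚ)) ∧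
    ∀ i, i ∉ P → i ∉ Q → coef i = 0}

/-- Generalized number lattices with arbitrary finite index types. -/
lemma isGenNumLat_of_finite {M : Type*} [AddCommGroup M] [Module ℚ M]
    {ι κ : Type*} [Fintype ι] [Fintype κ] (b : ι → M) (c : κ → M) :
    IsGenNumLat {x : M | ∃ (l : ι → ℤ) (m : κ → ℚ),
      x = (∑ i, (l i : ℚ) • b i) + ∑ j, m j • c j} := by
  refine ⟨Fintype.card ι, Fintype.card κ, b ∘ (Fintype.equivFin ι).symm,
    c ∘ (Fintype.equivFin κ).symm, ?_⟩
  ext x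
  constructor
  · rintro ⟨l, m, rfl⟩
    refine ⟨l ∘ (Fintype.equivFin ι).symm, m ∘ (Fintype.equivFin κ).symm, ?_⟩
    rw [← Fintype.sum_equiv (Fintype.equivFin ι) _ _ (fun i => rfl),
      ← Fintype.sum_equiv (Fintype.equivFin κ) _ _ (fun j => rfl)]
    simp
  · rintro ⟨l, m, rfl⟩
    refine ⟨l ∘ (Fintype.equivFin ι), m ∘ (Fintype.equivFin κ), ?_⟩
    rw [← Fintype.sum_equiv (Fintype.equivFin ι) _ _ (fun i => rfl),
      ← Fintype.sum_equiv (Fintype.equivFin κ) _ _ (fun j => rfl)]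
    simp

/-- Splitting a sum over `X` into the parts over two disjoint sets, when the summand
vanishes elsewhere. -/
lemma sum_split {M : Type*} [AddCommGroup M] (P Q : Set X) (hPQ : Disjoint P Q)
    (F : X → M) (hF : ∀ x, x ∉ P → x ∉ Q → F x = 0) :
    ∑ x, F x = (∑ i : P, F i) + ∑ j : Q, F j := by
  rw [Finset.sum_set_coe (s := P), Finset.sum_set_coe (s := Q),
    ← Finset.sum_union (by simpa using Set.disjoint_toFinset.mpr hPQ)]
  refine (Finset.sum_subset (Finset.subset_univ _) ?_).symm
  intro x _ hx
  simp only [Finset.mem_union, Set.mem_toFinset] at hx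
  push_neg at hx
  exact hF x hx.1 hx.2

lemma latOf_isGenNumLat (v : X → (X → ℚ)) (P Q : Set X) (hPQ : Disjoint P Q) :
    IsGenNumLat (LatOf v P Q) := by
  have : LatOf v P Q = {x : X → ℚ | ∃ (l : P → ℤ) (m : Q → ℚ),
      x = (∑ i : P, (l i : ℚ) • v i) + ∑ j : Q, m j • v j} := by
    ext f
    constructor
    · rintro ⟨coef, rfl, hint, hzero⟩
      choose z hz using hint
      refine ⟨fun i => z i i.2, fun j => coef j, ?_⟩
      rw [sum_split P Q hPQ _ (fun x hxP hxQ => by rw [hzero x hxP hxQ, zero_smul])]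
      congr 1
      exact Finset.sum_congr rfl (fun i _ => by rw [← hz i i.2])
    · rintro ⟨l, m, rfl⟩
      refine ⟨fun x => if h : x ∈ P then (l ⟨x, h⟩ : ℚ) else if h : x ∈ Q then m ⟨x, h⟩ else 0,
        ?_, ?_, ?_⟩
      · rw [sum_split P Q hPQ (fun x => _ • v x) (fun x hxP hxQ => by
          simp only [dif_neg hxP, dif_neg hxQ, zero_smul])]
        congr 1
        · exact Finset.sum_congr rfl fun i _ => by simp only [dif_pos i.2]
        · refine Finset.sum_congr rfl fun j _ => ?_
          simp only [dif_neg (Set.disjoint_right.mp hPQ j.2), dif_pos j.2]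
      · intro i hi
        exact ⟨l ⟨i, hi⟩, by simp only [dif_pos hi]⟩
      · intro i hiP hiQ
        simp only [dif_neg hiP, dif_neg hiQ]
  rw [this]
  exact isGenNumLat_of_finite _ _

/-- The key duality computation: the dual lattice of a lattice in normal form. -/
lemma dualLat_latOf [DecidableEq X] (M N : Matrix X X ℚ) (hMN : M * N = 1) (hNM : N * M = 1)
    (P Q : Set X) (hPQ : Disjoint P Q) :
    dualLat (LatOf (fun i => M i) P Q) = LatOf (fun j x => N x j) P (P ∪ Q)ᶜ := by
  have pair_eq : ∀ (α β : X → ℚ),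
      ∑ x, (∑ i, α i • M i) x * (∑ j, β j • (fun y => N y j)) x = ∑ i, α i * β i := by
    intro α β
    have h1 : ∀ x, (∑ i, α i • M i) x = ∑ i, α i * M i x := by
      intro x; rw [Finset.sum_apply]; simp [mul_comm]
    have h2 : ∀ x, (∑ j, β j • (fun y => N y j)) x = ∑ j, β j * N x j := by
      intro x; rw [Finset.sum_apply]; simp [mul_comm]
    calc ∑ x, (∑ i, α i • M i) x * (∑ j, β j • (fun y => N y j)) x
        = ∑ x, ∑ i, ∑ j, (α i * β j) * (M i x * N x j) := by
          refine Finset.sum_congr rfl fun x _ => ?_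
          rw [h1 x, h2 x, Finset.sum_mul_sum]
          refine Finset.sum_congr rfl fun i _ => Finset.sum_congr rfl fun j _ => by ring
      _ = ∑ i, ∑ x, ∑ j, (α i * β j) * (M i x * N x j) := Finset.sum_comm
      _ = ∑ i, ∑ j, ∑ x, (α i * β j) * (M i x * N x j) :=
          Finset.sum_congr rfl fun i _ => Finset.sum_comm
      _ = ∑ i, ∑ j, (α i * β j) * ∑ x, M i x * N x j := by
          refine Finset.sum_congr rfl fun i _ => Finset.sum_congr rfl fun j _ => ?_
          rw [Finset.mul_sum]
      _ = ∑ i, ∑ j, (α i * β j) * (1 : Matrix X X ℚ) i j := by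
          refine Finset.sum_congr rfl fun i _ => Finset.sum_congr rfl fun j _ => ?_
          rw [← Matrix.mul_apply, hMN]
      _ = ∑ i, α i * β i := by
          refine Finset.sum_congr rfl fun i _ => ?_
          rw [Finset.sum_eq_single i (fun j _ hj => by
            rw [Matrix.one_apply_ne (Ne.symm hj), mul_zero]) (by simp)]
          rw [Matrix.one_apply_eq, mul_one]
  have reconstruct : ∀ h : X → ℚ, h = ∑ j, (∑ x, M j x * h x) • (fun y => N y j) := by
    intro h
    funext y
    rw [Finset.sum_apply]
    simp only [Pi.smul_apply, smul_eq_mul]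
    refine Eq.symm ?_
    calc ∑ j, (∑ x, M j x * h x) * N y j
        = ∑ j, ∑ x, N y j * M j x * h x := by
          refine Finset.sum_congr rfl fun j _ => ?_
          rw [Finset.sum_mul]
          refine Finset.sum_congr rfl fun x _ => by ring
      _ = ∑ x, (∑ j, N y j * M j x) * h x := by
          rw [Finset.sum_comm]
          refine Finset.sum_congr rfl fun x _ => by rw [Finset.sum_mul]
      _ = h y := by
          rw [Finset.sum_eq_single y (fun x _ hx => by
            rw [← Matrix.mul_apply, hNM, Matrix.one_apply_ne (Ne.symm hx), zero_mul])
            (by simp)]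
          rw [← Matrix.mul_apply, hNM, Matrix.one_apply_eq, one_mul]
  ext h
  constructor
  · intro hh
    refine ⟨fun j => ∑ x, M j x * h x, reconstruct h, ?_, ?_⟩
    · intro i hi
      have hmem : M i ∈ LatOf (fun i => M i) P Q := by
        refine ⟨fun x => if x = i then 1 else 0, ?_, ?_, ?_⟩
        · funext y
          rw [Finset.sum_apply]
          simp only [Pi.smul_apply, smul_eq_mul]
          rw [Finset.sum_eq_single i (fun x _ hx => by rw [if_neg hx, zero_mul]) (by simp)]
          rw [if_pos rfl, one_mul]
        · intro x _
          refine ⟨if x = i then 1 else 0, ?_⟩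
          by_cases hx : x = i <;> simp [hx]
        · intro x hxP _
          have hxi : x ≠ i := by rintro rfl; exact hxP hi
          simp only [if_neg hxi]
      obtain ⟨z, hz⟩ := hh _ hmem
      exact ⟨z, hz⟩
    · intro i hiP hiR
      simp only [Set.mem_compl_iff, Set.mem_union, not_not] at hiR
      have hiQ : i ∈ Q := hiR.resolve_left hiP
      by_contra hne
      set s : ℚ := ∑ x, M i x * h x with hs
      have hs0 : s ≠ 0 := hne
      have key : ∀ q : ℚ, ∃ z : ℤ, q * s = (z : ℚ) := by
        intro q
        have hmem : q • M i ∈ LatOf (fun i => M i) P Q := by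
          refine ⟨fun x => if x = i then q else 0, ?_, ?_, ?_⟩
          · funext y
            rw [Finset.sum_apply]
            simp only [Pi.smul_apply, smul_eq_mul]
            rw [Finset.sum_eq_single i (fun x _ hx => by rw [if_neg hx, zero_mul]) (by simp)]
            rw [if_pos rfl]
          · intro x hxP
            refine ⟨0, ?_⟩
            have hxi : x ≠ i := by rintro rfl; exact (Set.disjoint_left.mp hPQ hxP) hiQ
            simp only [if_neg hxi, Int.cast_zero]
          · intro x _ hxQ
            have hxi : x ≠ i := by rintro rfl; exact hxQ hiQ
            simp only [if_neg hxi]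
        obtain ⟨z, hz⟩ := hh _ hmem
        refine ⟨z, ?_⟩
        rw [← hz, hs, Finset.mul_sum]
        refine Finset.sum_congr rfl fun x _ => by
          simp only [Pi.smul_apply, smul_eq_mul]; ring
      obtain ⟨z, hz⟩ := key (1 / (2 * s))
      have h12 : (1 : ℚ) / (2 * s) * s = 1 / 2 := by field_simp
      rw [h12] at hz
      have h2z : (2 : ℤ) * z = 1 := by
        have : (2 : ℚ) * (z : ℚ) = 1 := by rw [← hz]; ring
        exact_mod_cast this
      omega
  · rintro ⟨β, rfl, hint, hzero⟩
    rintro f ⟨α, rfl, hintα, hzeroα⟩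
    rw [pair_eq α β]
    have hterm : ∀ i, ∃ z : ℤ, α i * β i = (z : ℚ) := by
      intro i
      by_cases hiP : i ∈ P
      · obtain ⟨z1, hz1⟩ := hintα i hiP
        obtain ⟨z2, hz2⟩ := hint i hiP
        exact ⟨z1 * z2, by rw [hz1, hz2]; push_cast; ring⟩
      · by_cases hiQ : i ∈ Q
        · refine ⟨0, ?_⟩
          rw [hzero i hiP (by simp [hiQ]), mul_zero, Int.cast_zero]
        · refine ⟨0, ?_⟩
          rw [hzeroα i hiP hiQ, zero_mul, Int.cast_zero]
    choose z hz using hterm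
    exact ⟨∑ i, z i, by rw [Finset.sum_congr rfl fun i _ => hz i]; push_cast; rfl⟩

lemma sum_split'' {M : Type*} [AddCommGroup M] (s t : Finset X) (hst : Disjoint s t)
    (F : X → M) (hF : ∀ x, x ∉ s → x ∉ t → F x = 0) :
    ∑ x, F x = (∑ x ∈ s, F x) + ∑ x ∈ t, F x := by
  rw [← Finset.sum_union hst]
  refine (Finset.sum_subset (Finset.subset_univ _) ?_).symm
  intro x _ hx
  simp only [Finset.mem_union] at hx
  push_neg at hx
  exact hF x hx.1 hx.2

lemma exists_normal_form [DecidableEq X] {n k : ℕ} (b : Fin n → (X → ℚ)) (c : Fin k → (X → ℚ)) :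
    ∃ (M N : Matrix X X ℚ) (P Q : Set X), M * N = 1 ∧ N * M = 1 ∧ Disjoint P Q ∧
      {x | ∃ (l : Fin n → ℤ) (m : Fin k → ℚ),
        x = (∑ i, (l i : ℚ) • b i) + ∑ j, m j • c j} = LatOf (fun i => M i) P Q := by
  set W : Submodule ℚ (X → ℚ) := Submodule.span ℚ (Set.range c) with hW
  set π : (X → ℚ) →ₗ[ℤ] ((X → ℚ) ⧸ W) := W.mkQ.restrictScalars ℤ with hπdef
  set Λ : Submodule ℤ (X → ℚ) := Submodule.span ℤ (Set.range b) with hΛ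
  set Λ' : Submodule ℤ ((X → ℚ) ⧸ W) := Λ.map π with hΛ'
  have hΛ'fg : Λ'.FG := (Submodule.fg_span (Set.finite_range b)).map π
  haveI : Module.Finite ℤ ↥Λ' := Module.Finite.iff_fg.mpr hΛ'fg
  haveI : Module.IsTorsionFree ℤ ((X → ℚ) ⧸ W) := Module.IsTorsionFree.trans_faithfulSMul ℤ ℚ _
  set ι := Module.Free.ChooseBasisIndex ℤ ↥Λ' with hι
  set B : Module.Basis ι ℤ ↥Λ' := Module.Free.chooseBasis ℤ ↥Λ' with hB
  set u : ι → ((X → ℚ) ⧸ W) := fun i => (B i : ((X → ℚ) ⧸ W)) with hu_def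
  -- linear independence of u over ℚ
  have hu_int : LinearIndependent ℤ u := by
    have := B.linearIndependent
    exact this.map' Λ'.subtype Λ'.ker_subtype
  have hu : LinearIndependent ℚ u := (LinearIndependent.iff_fractionRing ℤ ℚ).mp hu_int
  -- span of u
  have hspan_u : Submodule.span ℤ (Set.range u) = Λ' := by
    have h1 : Set.range u = Λ'.subtype '' (Set.range B) := by
      rw [← Set.range_comp]; rfl
    rw [h1, ← Submodule.map_span, B.span_eq, Submodule.map_top, Submodule.range_subtype]
  -- lift the basis
  have lift : ∀ i : ι, ∃ y, y ∈ Λ ∧ π y = u i := by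
    intro i
    have : u i ∈ Λ' := (B i).2
    rw [hΛ'] at this
    obtain ⟨y, hy, hyπ⟩ := Submodule.mem_map.mp this
    exact ⟨y, hy, hyπ⟩
  choose a haΛ haπ using lift
  -- W.mkQ kills exactly W
  have hker : ∀ v : X → ℚ, π v = 0 ↔ v ∈ W := by
    intro v
    constructor
    · intro h
      have : v ∈ LinearMap.ker W.mkQ := h
      rwa [W.ker_mkQ] at this
    · intro h
      have : v ∈ LinearMap.ker W.mkQ := by rwa [W.ker_mkQ]
      exact this
  -- description of K via Λ and W
  have hKdesc : ∀ x : X → ℚ, (∃ (l : Fin n → ℤ) (m : Fin k → ℚ),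
      x = (∑ i, (l i : ℚ) • b i) + ∑ j, m j • c j) ↔ ∃ y ∈ Λ, ∃ v ∈ W, x = y + v := by
    intro x
    constructor
    · rintro ⟨l, m, rfl⟩
      refine ⟨∑ i, (l i : ℚ) • b i, ?_, ∑ j, m j • c j, ?_, rfl⟩
      · have : (∑ i, (l i : ℚ) • b i) = ∑ i, l i • b i := by
          refine Finset.sum_congr rfl fun i _ => ?_
          rw [Int.cast_smul_eq_zsmul]
        rw [this]
        exact Submodule.sum_mem _ fun i _ =>
          Submodule.smul_mem _ _ (Submodule.subset_span ⟨i, rfl⟩)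
      · exact Submodule.sum_mem _ fun j _ =>
          Submodule.smul_mem _ _ (Submodule.subset_span ⟨j, rfl⟩)
    · rintro ⟨y, hy, v, hv, rfl⟩
      obtain ⟨l, hl⟩ := (Submodule.mem_span_range_iff_exists_fun ℤ).mp hy
      obtain ⟨m, hm⟩ := (Submodule.mem_span_range_iff_exists_fun ℚ).mp hv
      refine ⟨l, m, ?_⟩
      rw [← hl, ← hm]
      congr 1
  -- description via a and W
  have hKdesc2 : ∀ x : X → ℚ, (∃ y ∈ Λ, ∃ v ∈ W, x = y + v) ↔
      ∃ (z : ι → ℤ) (v : X → ℚ), v ∈ W ∧ x = (∑ i, (z i : ℚ) • a i) + v := by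
    intro x
    constructor
    · rintro ⟨y, hy, v, hv, rfl⟩
      have : π y ∈ Λ' := Submodule.mem_map_of_mem hy
      rw [← hspan_u] at this
      obtain ⟨z, hz⟩ := (Submodule.mem_span_range_iff_exists_fun ℤ).mp this
      have hsub : y - ∑ i, z i • a i ∈ W := by
        rw [← hker]
        rw [map_sub, map_sum]
        have : ∀ i ∈ Finset.univ, π (z i • a i) = z i • u i := fun i _ => by
          rw [map_zsmul]
          rw [haπ]
        rw [Finset.sum_congr rfl this, hz, sub_self]
      refine ⟨z, (y - ∑ i, z i • a i) + v, Submodule.add_mem _ hsub hv, ?_⟩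
      have : (∑ i, (z i : ℚ) • a i) = ∑ i, z i • a i := by
        refine Finset.sum_congr rfl fun i _ => ?_
        rw [Int.cast_smul_eq_zsmul]
      rw [this]
      abel
    · rintro ⟨z, v, hv, rfl⟩
      refine ⟨∑ i, (z i : ℚ) • a i, ?_, v, hv, rfl⟩
      have : (∑ i, (z i : ℚ) • a i) = ∑ i, z i • a i := by
        refine Finset.sum_congr rfl fun i _ => ?_
        rw [Int.cast_smul_eq_zsmul]
      rw [this]
      exact Submodule.sum_mem _ fun i _ => Submodule.smul_mem _ _ (haΛ i)
  -- a is ℚ-linearly independent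
  have hmkQa : W.mkQ ∘ a = u := by
    funext i
    exact haπ i
  have ha_li : LinearIndependent ℚ a := by
    refine LinearIndependent.of_comp W.mkQ ?_
    rw [show (W.mkQ ∘ a : _ → _) = u from hmkQa]
    exact hu
  -- disjointness of span a and W
  have hdisj : Disjoint (Submodule.span ℚ (Set.range a)) W := by
    rw [Submodule.disjoint_def]
    intro x hxa hxW
    obtain ⟨q, hq⟩ := (Submodule.mem_span_range_iff_exists_fun ℚ).mp hxa
    have h0 : ∑ i, q i • u i = 0 := by
      have h1 : W.mkQ x = 0 := by
        rw [← LinearMap.mem_ker, W.ker_mkQ]; exact hxW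
      calc ∑ i, q i • u i = W.mkQ (∑ i, q i • a i) := by
            rw [map_sum]
            refine Finset.sum_congr rfl fun i _ => ?_
            rw [_root_.map_smul]
            rw [show W.mkQ (a i) = u i from haπ i]
        _ = 0 := by rw [hq, h1]
    have hq0 : ∀ i, q i = 0 := by
      have := Fintype.linearIndependent_iff.mp hu q h0
      exact this
    rw [← hq]
    simp [hq0]
  -- basis of W
  set sW := Module.finrank ℚ ↥W with hsW
  set Bw : Module.Basis (Fin sW) ℚ ↥W := Module.finBasis ℚ ↥W with hBw
  set w : Fin sW → (X → ℚ) := fun j => (Bw j : X → ℚ) with hw_def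
  have hw_li : LinearIndependent ℚ w := Bw.linearIndependent.map' W.subtype W.ker_subtype
  have hw_span : Submodule.span ℚ (Set.range w) = W := by
    have h1 : Set.range w = W.subtype '' (Set.range Bw) := by
      rw [← Set.range_comp]; rfl
    rw [h1, ← Submodule.map_span, Bw.span_eq, Submodule.map_top, Submodule.range_subtype]
  have hwW : ∀ j, w j ∈ W := fun j => (Bw j).2
  -- combined family
  set t : ι ⊕ Fin sW → (X → ℚ) := Sum.elim a w with ht_def
  have ht : LinearIndependent ℚ t := by
    refine ha_li.sum_type hw_li ?_
    rw [hw_span]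
    exact hdisj
  -- extend to a basis of the whole space
  obtain ⟨U', hcompl⟩ := Submodule.exists_isCompl (Submodule.span ℚ (Set.range t))
  set Bt : Module.Basis (ι ⊕ Fin sW) ℚ ↥(Submodule.span ℚ (Set.range t)) := Module.Basis.span ht with hBt
  set Bu' : Module.Basis (Fin (Module.finrank ℚ ↥U')) ℚ ↥U' := Module.finBasis ℚ ↥U' with hBu'
  set e0 := Submodule.prodEquivOfIsCompl _ _ hcompl with he0
  set vbig := (Bt.prod Bu').map e0 with hvbig_def
  have hvbig : ∀ s, vbig (Sum.inl s) = t s := by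
    intro s
    rw [hvbig_def, Module.Basis.map_apply]
    have h1 : (Bt.prod Bu') (Sum.inl s) = (Bt s, 0) := by
      ext
      · rw [Module.Basis.prod_apply_inl_fst]
      · rw [Module.Basis.prod_apply_inl_snd]
    rw [h1]
    show (↑(Bt s) + ((0 : ↥U') : X → ℚ) : X → ℚ) = t s
    rw [Submodule.coe_zero, add_zero, hBt, Module.Basis.span_apply]
  -- reindex over X
  set eX : ((ι ⊕ Fin sW) ⊕ Fin (Module.finrank ℚ ↥U')) ≃ X :=
    vbig.indexEquiv (Pi.basisFun ℚ X) with heX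
  set vX := vbig.reindex eX with hvX_def
  have hvX : ∀ s, vX (eX s) = vbig s := by
    intro s
    rw [hvX_def, Module.Basis.reindex_apply, Equiv.symm_apply_apply]
  -- the matrix
  set Mm : Matrix X X ℚ := Matrix.of (fun i j => vX i j) with hMm
  have hinvT : Invertible Mmᵀ := by
    have h1 : (Pi.basisFun ℚ X).toMatrix vX = Mmᵀ := by
      ext i j
      rw [Module.Basis.toMatrix_apply, Pi.basisFun_repr]
      rfl
    rw [← h1]
    exact (Pi.basisFun ℚ X).invertibleToMatrix vX
  haveI := hinvT
  haveI hinv : Invertible Mm := Matrix.invertibleOfInvertibleTranspose Mm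
  set P : Set X := Set.range (fun i : ι => eX (Sum.inl (Sum.inl i))) with hP
  set Q : Set X := Set.range (fun j : Fin sW => eX (Sum.inl (Sum.inr j))) with hQ
  have hPQ : Disjoint P Q := by
    rw [Set.disjoint_left]
    rintro x ⟨i, rfl⟩ ⟨j, hj⟩
    exact Sum.inr_ne_inl (Sum.inl.inj (eX.injective hj))
  refine ⟨Mm, ⅟Mm, P, Q, mul_invOf_self Mm, invOf_mul_self Mm, hPQ, ?_⟩
  have hrowP : ∀ i : ι, Mm (eX (Sum.inl (Sum.inl i))) = a i := by
    intro i
    show vX (eX (Sum.inl (Sum.inl i))) = a i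
    rw [hvX, hvbig]
    rfl
  have hrowQ : ∀ j : Fin sW, Mm (eX (Sum.inl (Sum.inr j))) = w j := by
    intro j
    show vX (eX (Sum.inl (Sum.inr j))) = w j
    rw [hvX, hvbig]
    rfl
  ext x
  rw [Set.mem_setOf_eq, hKdesc x, hKdesc2 x]
  constructor
  · rintro ⟨z, v, hv, rfl⟩
    obtain ⟨m, hm⟩ := (Submodule.mem_span_range_iff_exists_fun ℚ).mp (by rw [hw_span]; exact hv)
    set coef : X → ℚ := fun x =>
      Sum.elim (Sum.elim (fun i => (z i : ℚ)) m) (fun _ => 0) (eX.symm x) with hcoef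
    refine ⟨coef, ?_, ?_, ?_⟩
    · rw [← Equiv.sum_comp eX (fun y => coef y • Mm y)]
      have hterm : ∀ s, coef (eX s) • Mm (eX s) =
          Sum.elim (Sum.elim (fun i => (z i : ℚ) • a i) (fun j => m j • w j)) (fun _ => 0) s := by
        intro s
        rcases s with s | r
        · rcases s with i | j
          · simp only [hcoef, Equiv.symm_apply_apply, Sum.elim_inl, hrowP]
          · simp only [hcoef, Equiv.symm_apply_apply, Sum.elim_inl, Sum.elim_inr, hrowQ]
        · simp only [hcoef, Equiv.symm_apply_apply, Sum.elim_inr, zero_smul]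
      rw [Finset.sum_congr rfl (fun s _ => hterm s)]
      rw [Fintype.sum_sum_type, Fintype.sum_sum_type]
      simp only [Sum.elim_inl, Sum.elim_inr]
      rw [Finset.sum_const_zero, add_zero, hm]
    · rintro y ⟨i, rfl⟩
      refine ⟨z i, ?_⟩
      simp only [hcoef, Equiv.symm_apply_apply, Sum.elim_inl]
    · intro y hyP hyQ
      rcases hs : eX.symm y with s | r
      · rcases s with i | j
        · exfalso
          apply hyP
          refine ⟨i, ?_⟩
          show eX (Sum.inl (Sum.inl i)) = y
          rw [← hs, Equiv.apply_symm_apply]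
        · exfalso
          apply hyQ
          refine ⟨j, ?_⟩
          show eX (Sum.inl (Sum.inr j)) = y
          rw [← hs, Equiv.apply_symm_apply]
      · simp only [hcoef, hs, Sum.elim_inr]
  · rintro ⟨coef, rfl, hint, hzero⟩
    choose zz hzz using hint
    set φ : ι → X := fun i => eX (Sum.inl (Sum.inl i)) with hφ
    set ψ : Fin sW → X := fun j => eX (Sum.inl (Sum.inr j)) with hψ
    have hφinj : Function.Injective φ := fun i1 i2 h =>
      Sum.inl.inj (Sum.inl.inj (eX.injective h))
    have hψinj : Function.Injective ψ := fun i1 i2 h =>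
      Sum.inr.inj (Sum.inl.inj (eX.injective h))
    have hmemP : ∀ x, x ∈ Finset.univ.image φ ↔ x ∈ P := by
      intro x
      simp only [Finset.mem_image, Finset.mem_univ, true_and, hP]
      exact Iff.rfl
    have hmemQ : ∀ x, x ∈ Finset.univ.image ψ ↔ x ∈ Q := by
      intro x
      simp only [Finset.mem_image, Finset.mem_univ, true_and, hQ]
      exact Iff.rfl
    have hdisj' : Disjoint (Finset.univ.image φ) (Finset.univ.image ψ) := by
      rw [Finset.disjoint_left]
      intro x hx1 hx2
      exact Set.disjoint_left.mp hPQ ((hmemP x).mp hx1) ((hmemQ x).mp hx2)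
    have hsplit := sum_split'' (Finset.univ.image φ) (Finset.univ.image ψ) hdisj'
      (fun y => coef y • Mm y)
      (fun y hyP hyQ => by
        show coef y • Mm y = 0
        rw [hzero y (fun h => hyP ((hmemP y).mpr h)) (fun h => hyQ ((hmemQ y).mpr h)), zero_smul])
    refine ⟨fun i => zz (φ i) ⟨i, rfl⟩,
      ∑ j ∈ Finset.univ.image ψ, coef j • Mm j, ?_, ?_⟩
    · refine Submodule.sum_mem _ fun j hj => ?_
      obtain ⟨j0, hj0⟩ := ((hmemQ j).mp hj)
      refine Submodule.smul_mem _ _ ?_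
      rw [← hj0]
      rw [show Mm (ψ j0) = w j0 from hrowQ j0]
      exact hwW j0
    · rw [hsplit]
      congr 1
      rw [Finset.sum_image (fun i _ j _ h => hφinj h)]
      refine Finset.sum_congr rfl fun i _ => ?_
      show coef (φ i) • Mm (φ i) = _
      rw [show Mm (φ i) = a i from hrowP i, ← hzz (φ i) ⟨i, rfl⟩]
end Aux

open Matrix in
theorem stmt4 {X : Type*} [Fintype X] (K K' : Set (X → ℚ))
    (hK : IsGenNumLat K) (hK' : IsGenNumLat K') :
    dualLat (K + K') = dualLat K ∩ dualLat K' ∧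
    dualLat (K ∩ K') = dualLat K + dualLat K' := by
  classical
  have hzero : ∀ (K0 : Set (X → ℚ)), IsGenNumLat K0 → (0 : X → ℚ) ∈ K0 := by
    rintro K0 ⟨n, k, b, c, rfl⟩
    exact ⟨0, 0, by simp⟩
  have hdz : ∀ A : Set (X → ℚ), (0 : X → ℚ) ∈ dualLat A := by
    intro A f hf
    exact ⟨0, by simp⟩
  have part1 : ∀ (A B : Set (X → ℚ)), (0 : X → ℚ) ∈ A → (0 : X → ℚ) ∈ B →
      dualLat (A + B) = dualLat A ∩ dualLat B := by
    intro A B hA hB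
    ext g
    constructor
    · intro hg
      constructor
      · intro f hf
        have := Set.add_mem_add hf hB
        rw [add_zero] at this
        exact hg f this
      · intro f hf
        have := Set.add_mem_add hA hf
        rw [zero_add] at this
        exact hg f this
    · rintro ⟨hg1, hg2⟩ f hf
      obtain ⟨f1, hf1, f2, hf2, rfl⟩ := Set.mem_add.mp hf
      obtain ⟨z1, hz1⟩ := hg1 f1 hf1
      obtain ⟨z2, hz2⟩ := hg2 f2 hf2
      refine ⟨z1 + z2, ?_⟩
      push_cast
      rw [← hz1, ← hz2, ← Finset.sum_add_distrib]
      refine Finset.sum_congr rfl fun x _ => ?_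
      show (f1 x + f2 x) * g x = _
      ring
  have hsumGNL : ∀ {A B : Set (X → ℚ)}, IsGenNumLat A → IsGenNumLat B →
      IsGenNumLat (A + B) := by
    rintro A B ⟨n1, k1, b1, c1, rfl⟩ ⟨n2, k2, b2, c2, rfl⟩
    have heq : ({x : X → ℚ | ∃ (l : Fin n1 → ℤ) (m : Fin k1 → ℚ),
          x = (∑ i, (l i : ℚ) • b1 i) + ∑ j, m j • c1 j} +
        {x : X → ℚ | ∃ (l : Fin n2 → ℤ) (m : Fin k2 → ℚ),
          x = (∑ i, (l i : ℚ) • b2 i) + ∑ j, m j • c2 j})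
        = {x : X → ℚ | ∃ (l : Fin n1 ⊕ Fin n2 → ℤ) (m : Fin k1 ⊕ Fin k2 → ℚ),
            x = (∑ i, (l i : ℚ) • Sum.elim b1 b2 i) + ∑ j, m j • Sum.elim c1 c2 j} := by
      ext x
      constructor
      · intro hx
        obtain ⟨f, ⟨l1, m1, rfl⟩, g, ⟨l2, m2, rfl⟩, rfl⟩ := Set.mem_add.mp hx
        refine ⟨Sum.elim l1 l2, Sum.elim m1 m2, ?_⟩
        rw [Fintype.sum_sum_type, Fintype.sum_sum_type]
        simp only [Sum.elim_inl, Sum.elim_inr]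
        abel
      · rintro ⟨l, m, rfl⟩
        refine Set.mem_add.mpr ⟨(∑ i, (l (Sum.inl i) : ℚ) • b1 i) + ∑ j, m (Sum.inl j) • c1 j,
          ⟨_, _, rfl⟩,
          (∑ i, (l (Sum.inr i) : ℚ) • b2 i) + ∑ j, m (Sum.inr j) • c2 j, ⟨_, _, rfl⟩, ?_⟩
        rw [Fintype.sum_sum_type, Fintype.sum_sum_type]
        simp only [Sum.elim_inl, Sum.elim_inr]
        abel
    rw [heq]
    exact isGenNumLat_of_finite _ _
  have hdual : ∀ {A : Set (X → ℚ)}, IsGenNumLat A →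
      IsGenNumLat (dualLat A) ∧ dualLat (dualLat A) = A := by
    rintro A ⟨n, k, b, c, rfl⟩
    obtain ⟨M, N, P, Q, hMN, hNM, hPQ, hA⟩ := exists_normal_form b c
    rw [hA]
    rw [dualLat_latOf M N hMN hNM P Q hPQ]
    have hPR : Disjoint P (P ∪ Q)ᶜ := by
      rw [Set.disjoint_left]
      intro x hx hx2
      exact hx2 (Or.inl hx)
    constructor
    · exact latOf_isGenNumLat _ _ _ hPR
    · have h2 := dualLat_latOf Nᵀ Mᵀ
        (by rw [← Matrix.transpose_mul, hMN, Matrix.transpose_one])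
        (by rw [← Matrix.transpose_mul, hNM, Matrix.transpose_one]) P (P ∪ Q)ᶜ hPR
      have e1 : (fun j x => N x j) = (fun i => Nᵀ i) := rfl
      have hQ' : (P ∪ (P ∪ Q)ᶜ)ᶜ = Q := by
        ext x
        have hd : x ∈ P → x ∉ Q := fun h => Set.disjoint_left.mp hPQ h
        simp only [Set.mem_compl_iff, Set.mem_union]
        tauto
      rw [e1, h2, hQ']
      have e2 : (fun j x => Mᵀ x j) = (fun i => M i) := rfl
      rw [e2]
  have h1 : dualLat (K + K') = dualLat K ∩ dualLat K' :=
    part1 K K' (hzero K hK) (hzero K' hK')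
  refine ⟨h1, ?_⟩
  obtain ⟨hdK, hddK⟩ := hdual hK
  obtain ⟨hdK', hddK'⟩ := hdual hK'
  have h2 : dualLat (dualLat K + dualLat K') = K ∩ K' := by
    rw [part1 _ _ (hdz K) (hdz K'), hddK, hddK']
  have h3 := (hdual (hsumGNL hdK hdK')).2
  rw [← h2, h3]
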